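/- In a market with exactly one firm f, for every nonempty family 𝒯_f of feasible sets of workers, every firm value function b, and arbitrary worker values a, there exists an r-stable arrangement. -/

import Mathlib

open Finset

namespace TwoSidedMatching

variable {W F : Type*} [Fintype W] [DecidableEq W] [Fintype F] [DecidableEq F]

/-- The set of workers assigned to firm `f` under assignment `X`. -/
def assigned (X : W → Option F) (f : F) : Finset W :=
  Finset.univ.filter fun w => X w = some f

/-- Payoff of worker `w`: `a w f + s w f` if matched to `f`, and `0` if unmatched. -/
def workerPayoff (a s : W → F → ℝ) (X : W → Option F) (w : W) : ℝ :=
  match X w with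
  | some f => a w f + s w f
  | none => 0

/-- Payoff of firm `f`: value of its assigned set minus total salaries paid. -/
def firmPayoff (b : Finset W → F → ℝ) (s : W → F → ℝ) (X : W → Option F) (f : F) : ℝ :=
  b (assigned X f) f - ∑ w ∈ assigned X f, s w f

/-- An assignment is feasible if each firm's assigned set is feasible or empty. -/
def Feasible (𝒯 : F → Set (Finset W)) (X : W → Option F) : Prop :=
  ∀ f : F, assigned X f ∈ 𝒯 f ∨ assigned X f = ∅

/-- r-feasibility: each firm's assigned set is feasible. -/
def RFeasible (𝒯 : F → Set (Finset W)) (X : W → Option F) : Prop :=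
  ∀ f : F, assigned X f ∈ 𝒯 f

/-- A blocking coalition: a firm `f`, a feasible set `D ∈ 𝒯 f`, and salaries `r`
making all members of `D ∪ {f}` weakly better off and at least one strictly better off. -/
def Blocks (a : W → F → ℝ) (b : Finset W → F → ℝ) (𝒯 : F → Set (Finset W))
    (s : W → F → ℝ) (X : W → Option F) : Prop :=
  ∃ f : F, ∃ D ∈ 𝒯 f, ∃ r : W → ℝ,
    (∀ w ∈ D, a w f + r w ≥ workerPayoff a s X w) ∧
    (b D f - ∑ w ∈ D, r w ≥ firmPayoff b s X f) ∧
    ((∃ w ∈ D, a w f + r w > workerPayoff a s X w) ∨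
      b D f - ∑ w ∈ D, r w > firmPayoff b s X f)

/-- Stability: feasible, individually rational for workers and firms, and no blocking coalition. -/
def Stable (a : W → F → ℝ) (b : Finset W → F → ℝ) (𝒯 : F → Set (Finset W))
    (s : W → F → ℝ) (X : W → Option F) : Prop :=
  Feasible 𝒯 X ∧ (∀ w, 0 ≤ workerPayoff a s X w) ∧
    (∀ f, 0 ≤ firmPayoff b s X f) ∧ ¬ Blocks a b 𝒯 s X

/-- r-stability: r-feasible, individually rational for workers, and no blocking coalition. -/
def RStable (a : W → F → ℝ) (b : Finset W → F → ℝ) (𝒯 : F → Set (Finset W))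
    (s : W → F → ℝ) (X : W → Option F) : Prop :=
  RFeasible 𝒯 X ∧ (∀ w, 0 ≤ workerPayoff a s X w) ∧ ¬ Blocks a b 𝒯 s X

/-- Total match value of an assignment. -/
def totalValue (a : W → F → ℝ) (b : Finset W → F → ℝ) (X : W → Option F) : ℝ :=
  (∑ w : W, match X w with
    | some f => a w f
    | none => 0) +
  ∑ f : F, b (assigned X f) f

/-- Two sets are intersecting if their intersection and both differences are nonempty. -/
def IntersectingSets (A B : Finset W) : Prop :=
  (A ∩ B).Nonempty ∧ (A \ B).Nonempty ∧ (B \ A).Nonempty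

/-- An intersecting family: does not contain `∅` and is closed under
intersections and unions of intersecting members. -/
def IntersectingFamily (ℋ : Set (Finset W)) : Prop :=
  ∅ ∉ ℋ ∧ ∀ A ∈ ℋ, ∀ B ∈ ℋ, IntersectingSets A B → A ∩ B ∈ ℋ ∧ A ∪ B ∈ ℋ

/-- Submodularity on intersecting pairs of a family. -/
def SubmodularOnIntersecting (ℋ : Set (Finset W)) (g : Finset W → ℤ) : Prop :=
  ∀ A ∈ ℋ, ∀ B ∈ ℋ, IntersectingSets A B → g (A ∪ B) + g (A ∩ B) ≤ g A + g B

/-- Supermodularity on intersecting pairs of a family. -/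
def SupermodularOnIntersecting (ℋ : Set (Finset W)) (g : Finset W → ℤ) : Prop :=
  ∀ A ∈ ℋ, ∀ B ∈ ℋ, IntersectingSets A B → g A + g B ≤ g (A ∪ B) + g (A ∩ B)

/-- A hierarchy: `∅` is not a member and any two members are nested or disjoint. -/
def Hierarchy (ℋ : Set (Finset W)) : Prop :=
  ∅ ∉ ℋ ∧ ∀ A ∈ ℋ, ∀ B ∈ ℋ, A ⊆ B ∨ B ⊆ A ∨ A ∩ B = ∅

/-- Feasible sets under upper-bound quotas: `|D ∩ D'| ≤ lam D'` for every `D' ∈ ℋ`. -/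
def upperSets (ℋ : Set (Finset W)) (lam : Finset W → ℤ) : Set (Finset W) :=
  {D | ∀ D' ∈ ℋ, ((D ∩ D').card : ℤ) ≤ lam D'}

/-- Feasible sets under lower and upper quotas: `lo D' ≤ |D ∩ D'| ≤ hi D'` for `D' ∈ ℋ`. -/
def quotaSets (ℋ : Set (Finset W)) (lo hi : Finset W → ℤ) : Set (Finset W) :=
  {D | ∀ D' ∈ ℋ, lo D' ≤ ((D ∩ D').card : ℤ) ∧ ((D ∩ D').card : ℤ) ≤ hi D'}

/-- Feasibility for the matching LP with upper-bound constraints. -/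
def LPFeasible (ℋ : F → Set (Finset W)) (lam : F → Finset W → ℤ) (x : W → F → ℝ) : Prop :=
  (∀ w f, 0 ≤ x w f) ∧ (∀ w, ∑ f : F, x w f ≤ 1) ∧
    ∀ f : F, ∀ D ∈ ℋ f, ∑ w ∈ D, x w f ≤ (lam f D : ℝ)

/-- Feasibility for the matching LP with lower and upper bound constraints. -/
def LPLBFeasible (ℋ : F → Set (Finset W)) (lo hi : F → Finset W → ℤ) (x : W → F → ℝ) : Prop :=
  (∀ w f, 0 ≤ x w f) ∧ (∀ w, ∑ f : F, x w f ≤ 1) ∧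
    ∀ f : F, ∀ D ∈ ℋ f, (lo f D : ℝ) ≤ ∑ w ∈ D, x w f ∧ ∑ w ∈ D, x w f ≤ (hi f D : ℝ)

/-- The LP objective: total match value of a fractional assignment. -/
def LPobj (α : W → F → ℝ) (x : W → F → ℝ) : ℝ :=
  ∑ w : W, ∑ f : F, α w f * x w f


/-- **Existence of an r-stable arrangement with one firm.** In a one-firm market with a
nonempty family of feasible sets and arbitrary firm value function and worker values,
an r-stable arrangement exists. -/
theorem one_firm_rstable_exists
    {W F : Type*} [Fintype W] [DecidableEq W] [Fintype F] [DecidableEq F] [Unique F]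
    (a : W → F → ℝ) (b : Finset W → F → ℝ) (𝒯 : F → Set (Finset W))
    (hne : ∀ f : F, (𝒯 f).Nonempty) :
    ∃ (X : W → Option F) (s : W → F → ℝ), RStable a b 𝒯 s X := by
  classical
  set f0 : F := default with hf0
  have hfin : (𝒯 f0).Finite := Set.toFinite _
  obtain ⟨D₀, hD₀⟩ := hne f0
  obtain ⟨D, hDmem, hmax⟩ := hfin.toFinset.exists_max_image
    (fun D => b D f0 + ∑ w ∈ D, a w f0) ⟨D₀, hfin.mem_toFinset.mpr hD₀⟩
  rw [hfin.mem_toFinset] at hDmem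
  refine ⟨fun w => if w ∈ D then some f0 else none, fun w f => -(a w f), ?_, ?_, ?_⟩
  · intro f
    have hf : f = f0 := Subsingleton.elim _ _
    subst hf
    have : assigned (fun w => if w ∈ D then some f0 else none) f0 = D := by
      ext w; by_cases hw : w ∈ D <;> simp [assigned, hw]
    rw [this]; exact hDmem
  · intro w
    by_cases hw : w ∈ D <;> simp [workerPayoff, hw]
  · rintro ⟨f, E, hE, r, h1, h2, h3⟩
    have hf : f = f0 := Subsingleton.elim _ _
    subst hf
    have hw0 : ∀ w, workerPayoff a (fun w f => -(a w f))
        (fun w => if w ∈ D then some f0 else none) w = 0 := by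
      intro w; by_cases hw : w ∈ D <;> simp [workerPayoff, hw]
    have hass : assigned (fun w => if w ∈ D then some f0 else none) f0 = D := by
      ext w; by_cases hw : w ∈ D <;> simp [assigned, hw]
    have hfp : firmPayoff b (fun w f => -(a w f))
        (fun w => if w ∈ D then some f0 else none) f0 = b D f0 + ∑ w ∈ D, a w f0 := by
      simp [firmPayoff, hass, sub_neg_eq_add]
    have hsum : ∑ w ∈ E, r w ≥ -∑ w ∈ E, a w f0 := by
      have : (0 : ℝ) ≤ ∑ w ∈ E, (a w f0 + r w) := by
        apply Finset.sum_nonneg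
        intro w hw
        have := h1 w hw
        rw [hw0 w] at this
        linarith
      rw [Finset.sum_add_distrib] at this
      linarith
    have hmaxE := hmax E (hfin.mem_toFinset.mpr hE)
    rw [hfp] at h2
    rcases h3 with ⟨w, hwE, hstrict⟩ | hstrict
    · rw [hw0 w] at hstrict
      have hsum' : ∑ w ∈ E, r w > -∑ w ∈ E, a w f0 := by
        have h0 : (0 : ℝ) < ∑ w ∈ E, (a w f0 + r w) := by
          apply Finset.sum_pos'
          · intro x hx
            have := h1 x hx
            rw [hw0 x] at this
            linarith
          · exact ⟨w, hwE, by linarith⟩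
        rw [Finset.sum_add_distrib] at h0
        linarith
      linarith
    · rw [hfp] at hstrict
      linarith

end TwoSidedMatching
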